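/- Let (M, 𝒮; e_1, …, e_h) be an (a, q, h, d)-pyramid, M_h = M / {e_1, …, e_h}, and S ∈ 𝒮. Then there is a restriction M' of M with r(M') = a + h such that (M', {S' ∈ 𝒮 : cl_{M_h}(S') = cl_{M_h}(S)}; e_1, …, e_h) is an (a, q, h, d)-pyramid. -/

import Mathlib

open Set
open scoped Classical

namespace Matroid

variable {α β : Type*}

/-- The rank of a set `X` in a matroid `M`: the maximum size of an independent subset of `X`
(appropriate for finite matroids). -/
noncomputable def rk (M : Matroid α) (X : Set α) : ℕ :=
  sSup {n | ∃ I, I ⊆ X ∧ M.Indep I ∧ I.ncard = n}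

/-- The rank `r(M)` of a matroid `M`. -/
noncomputable def rank (M : Matroid α) : ℕ := M.rk M.E

/-- The deletion `M \ D` of a set `D` from `M`. -/
def delete' (M : Matroid α) (D : Set α) : Matroid α := M ↾ (M.E \ D)

/-- The contraction `M / C` of a set `C` in `M`, defined via duality. -/
def contract' (M : Matroid α) (C : Set α) : Matroid α := (M✶.delete' C)✶

/-- `N` is a minor of `M`, i.e. `N = M / C \ D` for some sets `C` and `D`. -/
def IsMinor' (N M : Matroid α) : Prop := ∃ C D : Set α, (M.contract' C).delete' D = N

/-- An isomorphism between matroids, possibly on different ground types. -/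
def IsIso (M : Matroid α) (N : Matroid β) : Prop :=
  ∃ e : M.E ≃ N.E, ∀ I : Set M.E, M.Indep ((↑) '' I) ↔ N.Indep ((↑) '' (e '' I))

/-- `N` is isomorphic to the uniform matroid `U_{k,n}`: the ground set has `n` elements and
the independent sets are exactly the subsets with at most `k` elements. -/
def IsUnif (N : Matroid α) (k n : ℕ) : Prop :=
  N.E.Finite ∧ N.E.ncard = n ∧ ∀ I ⊆ N.E, (N.Indep I ↔ I.ncard ≤ k)

/-- `M` has a minor isomorphic to `U_{k,n}`. -/
def HasUnifMinor (M : Matroid α) (k n : ℕ) : Prop :=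
  ∃ N : Matroid α, N.IsMinor' M ∧ N.IsUnif k n

/-- `τ_a(M)`: the minimum size of a collection of subsets of `E(M)`, each of rank at most `a`,
whose union is `E(M)`. -/
noncomputable def tau (M : Matroid α) (a : ℕ) : ℕ :=
  sInf {n | ∃ 𝒞 : Finset (Set α),
    𝒞.card = n ∧ (∀ X ∈ 𝒞, X ⊆ M.E ∧ M.rk X ≤ a) ∧ M.E ⊆ ⋃₀ ↑𝒞}

/-- `M` is `d`-thick: every collection of sets, each of rank less than `r(M)`, whose union
is `E(M)`, has at least `d` members. -/
def Thick (M : Matroid α) (d : ℕ) : Prop :=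
  ∀ 𝒞 : Finset (Set α), (∀ X ∈ 𝒞, X ⊆ M.E ∧ M.rk X < M.rank) → M.E ⊆ ⋃₀ ↑𝒞 → d ≤ 𝒞.card

/-- A set `X` is `d`-thick in `M` if the restriction `M|X` is `d`-thick. -/
def ThickIn (M : Matroid α) (d : ℕ) (X : Set α) : Prop := (M ↾ X).Thick d

/-- A collection of sets is simple in `M` if its members are pairwise dissimilar,
i.e. distinct members have distinct closures. -/
def SimpleColl (M : Matroid α) (𝒳 : Finset (Set α)) : Prop :=
  ∀ X ∈ 𝒳, ∀ Y ∈ 𝒳, M.closure X = M.closure Y → X = Y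

/-- `ε_M(𝒳)`: the maximum size of a subcollection of `𝒳` that is simple in `M`. -/
noncomputable def eps (M : Matroid α) (𝒳 : Finset (Set α)) : ℕ :=
  sSup {n | ∃ 𝒴 : Finset (Set α), 𝒴 ⊆ 𝒳 ∧ M.SimpleColl 𝒴 ∧ 𝒴.card = n}

/-- `𝒳` is `d`-firm in `M`: every subcollection `𝒳'` with `|𝒳'| > |𝒳|/d` has the same rank
as `𝒳`. -/
def Firm (M : Matroid α) (d : ℕ) (𝒳 : Finset (Set α)) : Prop :=
  ∀ 𝒳' ⊆ 𝒳, 𝒳.card < d * 𝒳'.card → M.rk (⋃₀ ↑𝒳') = M.rk (⋃₀ ↑𝒳)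

/-- `ℱ` is a cover of the collection `𝒳` in `M`: every member of `𝒳` is contained in a member
of `ℱ`. -/
def CoverOf (M : Matroid α) (ℱ 𝒳 : Finset (Set α)) : Prop :=
  (∀ F ∈ ℱ, F ⊆ M.E) ∧ ∀ X ∈ 𝒳, ∃ F ∈ ℱ, X ⊆ F

/-- `ℱ` is a cover of the matroid `M`: every element of `E(M)` lies in a member of `ℱ`. -/
def CoverOfGround (M : Matroid α) (ℱ : Finset (Set α)) : Prop :=
  (∀ F ∈ ℱ, F ⊆ M.E) ∧ M.E ⊆ ⋃₀ ↑ℱ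

/-- The weight `wt^d_M(ℱ) = Σ_{F ∈ ℱ} d^{r_M(F)}`. -/
noncomputable def wt (M : Matroid α) (d : ℕ) (ℱ : Finset (Set α)) : ℕ :=
  ∑ F ∈ ℱ, d ^ M.rk F

/-- `ℱ` is a `d`-minimal cover of the collection `𝒳` in `M`. -/
def MinimalCoverOf (M : Matroid α) (d : ℕ) (ℱ 𝒳 : Finset (Set α)) : Prop :=
  M.CoverOf ℱ 𝒳 ∧ ∀ ℱ' : Finset (Set α), M.CoverOf ℱ' 𝒳 → M.wt d ℱ ≤ M.wt d ℱ'

/-- `ℱ` is a `d`-minimal cover of the matroid `M`. -/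
def MinimalCoverOfGround (M : Matroid α) (d : ℕ) (ℱ : Finset (Set α)) : Prop :=
  M.CoverOfGround ℱ ∧ ∀ ℱ' : Finset (Set α), M.CoverOfGround ℱ' → M.wt d ℱ ≤ M.wt d ℱ'

/-- `τ^d(M)`: the minimum weight of a cover of `M`. -/
noncomputable def tauW (M : Matroid α) (d : ℕ) : ℕ :=
  sInf {n | ∃ ℱ : Finset (Set α), M.CoverOfGround ℱ ∧ M.wt d ℱ = n}

/-- `𝒳` is `d`-scattered in `M`: every member of `𝒳` is `d`-thick in `M`, and
`{cl_M(X) : X ∈ 𝒳}` is a `d`-minimal cover of `𝒳` in `M`. -/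
def Scattered (M : Matroid α) (d : ℕ) (𝒳 : Finset (Set α)) : Prop :=
  (∀ X ∈ 𝒳, M.ThickIn d X) ∧ M.MinimalCoverOf d (𝒳.image M.closure) 𝒳

/-- `(M, 𝒮; L)` is an `(a, q, h, d)`-pyramid, where `h = L.length` and `L` lists the
elements `e_1, …, e_h`. -/
def IsPyramid (M : Matroid α) (𝒮 : Finset (Set α)) (L : List α) (a q d : ℕ) : Prop :=
  L.Nodup ∧ M.Indep {x | x ∈ L} ∧
  𝒮.Nonempty ∧
  (∀ S ∈ 𝒮, S ⊆ M.E ∧ M.rk S = a) ∧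
  (∀ S ∈ 𝒮, M.rk (S ∪ {x | x ∈ L}) = M.rk S + M.rk {x | x ∈ L}) ∧
  (∀ i < L.length, ∀ S ∈ 𝒮, ∃ f : Fin q → Set α,
    (∀ j, f j ∈ 𝒮) ∧
    (∀ j k, j ≠ k →
      (M.contract' {x | x ∈ L.take i}).closure (f j) ≠
        (M.contract' {x | x ∈ L.take i}).closure (f k)) ∧
    (∀ j, (M.contract' {x | x ∈ L.take (i+1)}).closure (f j) =
      (M.contract' {x | x ∈ L.take (i+1)}).closure S)) ∧
  (∀ S ∈ 𝒮, M.ThickIn d S)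

/-- `M` is representable over the field `F`. -/
def RepresentableOver (M : Matroid α) (F : Type*) [Field F] : Prop :=
  ∃ (n : ℕ) (φ : α → (Fin n → F)),
    ∀ I ⊆ M.E, (M.Indep I ↔ LinearIndependent F (fun x : I => φ x))

end Matroid

namespace Matroid


/-! ### Auxiliary lemmas -/

section Aux

variable {α : Type*} {M : Matroid α} {B C X Y I J R : Set α} {e : α}

lemma aux_eq_of_diff_eq_of_subset {A B C : Set α} (h : A \ C = B \ C) (hA : C ⊆ A)
    (hB : C ⊆ B) : A = B := by
  rw [← diff_union_of_subset hA, h, diff_union_of_subset hB]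

lemma aux_contract_ground (M : Matroid α) (C : Set α) : (M.contract' C).E = M.E \ C := rfl

lemma aux_contract_base_iff (hC : C ⊆ M.E) :
    (M.contract' C).IsBase B ↔ ∃ B₀, M.IsBase B₀ ∧ M.IsBasis (B₀ ∩ C) C ∧ B = B₀ \ C := by
  have hEC : M.E \ C ⊆ M✶.E := diff_subset
  rw [contract', delete', dual_ground, dual_isBase_iff', isBase_restrict_iff hEC,
    restrict_ground_eq]
  constructor
  · rintro ⟨hb, hBsub⟩
    obtain ⟨D, hD, heq⟩ := (show M✶.IsBasis ((M.E \ C) \ B) (M.E \ C) from hb).exists_isBase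
    have hDb : M✶.IsBasis (D ∩ (M.E \ C)) (M.E \ C) := by rwa [← heq]
    have hbasis := (hD.inter_isBasis_iff_compl_inter_isBasis_dual (X := M.E \ C) hEC).1 hDb
    rw [dual_dual, dual_ground, diff_diff_cancel_left hC] at hbasis
    refine ⟨M.E \ D, hD.compl_isBase_of_dual, hbasis, ?_⟩
    have h1 : B = (M.E \ C) \ ((M.E \ C) \ B) := (diff_diff_cancel_left hBsub).symm
    rw [h1, heq]
    ext x
    simp only [mem_diff, mem_inter_iff]
    tauto
  · rintro ⟨B₀, hB₀, hbasis, rfl⟩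
    have hBsub : B₀ \ C ⊆ M.E \ C := diff_subset_diff_left hB₀.subset_ground
    refine ⟨?_, hBsub⟩
    have h := hB₀.compl_inter_isBasis_of_inter_isBasis hbasis
    have hset : (M.E \ C) \ (B₀ \ C) = (M.E \ B₀) ∩ (M.E \ C) := by
      ext x; simp only [mem_diff, mem_inter_iff]; tauto
    rw [hset]; exact h

lemma aux_contract_indep_of_indep_union (hJ : M.IsBasis J C) (hIE : I ⊆ M.E \ C)
    (h : M.Indep (I ∪ J)) : (M.contract' C).Indep I := by
  obtain ⟨B₀, hB₀, hsub⟩ := h.exists_isBase_superset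
  have hJB : J ⊆ B₀ ∩ C := subset_inter ((subset_union_right).trans hsub) hJ.subset
  have hbasis : M.IsBasis (B₀ ∩ C) C :=
    (hB₀.indep.subset inter_subset_left).isBasis_of_subset_of_subset_closure inter_subset_right
      (hJ.subset_closure.trans (M.closure_subset_closure hJB))
  have hbase : (M.contract' C).IsBase (B₀ \ C) :=
    (aux_contract_base_iff hJ.subset_ground).2 ⟨B₀, hB₀, hbasis, rfl⟩
  exact hbase.indep.subset (subset_diff.2 ⟨(subset_union_left).trans hsub,
    (subset_diff.1 hIE).2⟩)

lemma aux_indep_union_of_contract_indep [M.Finite] (hJ : M.IsBasis J C) (hIE : I ⊆ M.E \ C)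
    (hI : (M.contract' C).Indep I) : M.Indep (I ∪ J) := by
  obtain ⟨B, hB, hIB⟩ := hI.exists_isBase_superset
  obtain ⟨B₀, hB₀, hbasis, rfl⟩ := (aux_contract_base_iff hJ.subset_ground).1 hB
  have hIC : Disjoint I C := (subset_diff.1 hIE).2
  have hIE' : I ⊆ M.E := hIE.trans diff_subset
  have hICE : I ∪ C ⊆ M.E := union_subset hIE' hJ.subset_ground
  have hIb : M.Indep (I ∪ (B₀ ∩ C)) :=
    hB₀.indep.subset (union_subset (hIB.trans diff_subset) inter_subset_left)
  have hIbasis : M.IsBasis (I ∪ (B₀ ∩ C)) (I ∪ C) := by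
    refine hIb.isBasis_of_subset_of_subset_closure (union_subset_union_right I inter_subset_right) ?_
    exact union_subset (subset_union_left.trans (M.subset_closure _ hIb.subset_ground))
      (hbasis.subset_closure.trans (M.closure_subset_closure subset_union_right))
  obtain ⟨K, hK, hJK⟩ := hJ.indep.subset_isBasis_of_subset
    ((hJ.subset).trans subset_union_right) hICE
  have hKC : K ∩ C = J := by
    obtain ⟨J', hJ', hKJ'⟩ := (hK.indep.subset inter_subset_left).subset_isBasis_of_subset
      inter_subset_right hJ.subset_ground
    refine ((M.set_finite (K ∩ C)
      (inter_subset_left.trans hK.indep.subset_ground)).eq_of_subset_of_encard_le'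
      (subset_inter hJK hJ.subset) ?_).symm
    calc (K ∩ C).encard ≤ J'.encard := encard_mono hKJ'
      _ = J.encard := hJ'.encard_eq_encard hJ
  have hdisj1 : Disjoint (K ∩ C) (K \ C) := disjoint_sdiff_right.mono_left inter_subset_right
  have hK1 : K.encard = J.encard + (K \ C).encard := by
    rw [← hKC, ← encard_union_eq hdisj1, inter_union_diff]
  have hdisj2 : Disjoint I (B₀ ∩ C) := hIC.mono_right inter_subset_right
  have hK2 : K.encard = I.encard + J.encard := by
    rw [hK.encard_eq_encard hIbasis, encard_union_eq hdisj2,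
      hbasis.encard_eq_encard hJ]
  have hJfin : J.encard ≠ ⊤ := (M.set_finite J hJ.indep.subset_ground).encard_lt_top.ne
  have hcard : (K \ C).encard = I.encard := by
    have h' : J.encard + (K \ C).encard = J.encard + I.encard := by
      rw [← hK1, hK2, add_comm]
    exact WithTop.add_left_cancel hJfin h'
  have hKCI : K \ C ⊆ I := by
    rw [diff_subset_iff, union_comm]
    exact hK.subset
  have h'' : K \ C = I := (M.set_finite I hIE').eq_of_subset_of_encard_le' hKCI hcard.symm.le
  have hKeq : K = I ∪ J := by rw [← h'', ← hKC, union_comm, inter_union_diff]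
  rw [← hKeq]; exact hK.indep

lemma aux_contract_closure_aux [M.Finite] (hC : C ⊆ M.E) (hX : X ⊆ M.E \ C) :
    (M.contract' C).closure X = M.closure (X ∪ C) \ C := by
  obtain ⟨J, hJ⟩ := M.exists_isBasis C hC
  obtain ⟨I, hI⟩ := (M.contract' C).exists_isBasis X (by rwa [aux_contract_ground])
  have hIX : I ⊆ M.E \ C := hI.subset.trans hX
  have hIJ : M.Indep (I ∪ J) := aux_indep_union_of_contract_indep hJ hIX hI.indep
  have hIbasis : M.IsBasis (I ∪ J) (X ∪ C) := by
    refine hIJ.isBasis_of_subset_of_subset_closure (union_subset_union hI.subset hJ.subset) ?_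
    refine union_subset (fun x hxX => ?_)
      (hJ.subset_closure.trans (M.closure_subset_closure subset_union_right))
    rw [hIJ.mem_closure_iff']
    refine ⟨(hX hxX).1, fun hind => ?_⟩
    have hxI : (M.contract' C).Indep (insert x I) := by
      refine aux_contract_indep_of_indep_union hJ (insert_subset (hX hxX) hIX) ?_
      rwa [insert_union]
    exact Or.inl (hI.mem_of_insert_indep hxX hxI)
  ext e
  simp only [mem_diff]
  constructor
  · intro he
    have heE : e ∈ (M.contract' C).E := (M.contract' C).closure_subset_ground _ he
    rw [aux_contract_ground] at heE
    rw [← hI.closure_eq_closure, hI.indep.mem_closure_iff'] at he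
    refine ⟨?_, heE.2⟩
    rw [← hIbasis.closure_eq_closure, hIJ.mem_closure_iff']
    refine ⟨heE.1, fun hind => ?_⟩
    have h' : (M.contract' C).Indep (insert e I) := by
      refine aux_contract_indep_of_indep_union hJ (insert_subset heE hIX) ?_
      rwa [insert_union]
    exact Or.inl (he.2 h')
  · rintro ⟨he, heC⟩
    have heE : e ∈ M.E := M.mem_ground_of_mem_closure he
    rw [← hIbasis.closure_eq_closure, hIJ.mem_closure_iff'] at he
    rw [← hI.closure_eq_closure, hI.indep.mem_closure_iff']
    refine ⟨by rw [aux_contract_ground]; exact ⟨heE, heC⟩, fun hind => ?_⟩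
    have hind' : M.Indep (insert e (I ∪ J)) := by
      rw [← insert_union]
      exact aux_indep_union_of_contract_indep hJ (insert_subset ⟨heE, heC⟩ hIX) hind
    rcases he.2 hind' with h | h
    · exact h
    · exact absurd (hJ.subset h) heC

lemma aux_contract_closure [M.Finite] (hC : C ⊆ M.E) (X : Set α) :
    (M.contract' C).closure X = M.closure (X ∪ C) \ C := by
  have h1 : (M.contract' C).closure X = (M.contract' C).closure (X ∩ (M.E \ C)) := by
    rw [← aux_contract_ground, closure_inter_ground]
  rw [h1, aux_contract_closure_aux hC inter_subset_right]
  have hset : (X ∩ (M.E \ C) ∪ C) ∩ M.E = (X ∪ C) ∩ M.E := by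
    ext x
    simp only [mem_inter_iff, mem_union, mem_diff]
    constructor
    · rintro ⟨h | h, hE⟩
      · exact ⟨Or.inl h.1, hE⟩
      · exact ⟨Or.inr h, hE⟩
    · rintro ⟨h | h, hE⟩
      · by_cases hxC : x ∈ C
        · exact ⟨Or.inr hxC, hE⟩
        · exact ⟨Or.inl ⟨h, hE, hxC⟩, hE⟩
      · exact ⟨Or.inr h, hE⟩
  rw [← closure_inter_ground, hset, closure_inter_ground]

lemma aux_restrict_closure (hXR : X ⊆ R) (hR : R ⊆ M.E) :
    (M ↾ R).closure X = M.closure X ∩ R := by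
  obtain ⟨I, hI⟩ := M.exists_isBasis X (hXR.trans hR)
  have hIR : (M ↾ R).IsBasis I X := (isBasis_restrict_iff hR).2 ⟨hI, hXR⟩
  rw [← hIR.closure_eq_closure, ← hI.closure_eq_closure]
  ext e
  constructor
  · intro he
    have heR : e ∈ R := (M ↾ R).closure_subset_ground _ he
    rw [hIR.indep.mem_closure_iff'] at he
    refine ⟨?_, heR⟩
    rw [hI.indep.mem_closure_iff']
    exact ⟨hR heR, fun hind => he.2 (restrict_indep_iff.2
      ⟨hind, insert_subset heR (hI.subset.trans hXR)⟩)⟩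
  · rintro ⟨he, heR⟩
    rw [hI.indep.mem_closure_iff'] at he
    rw [hIR.indep.mem_closure_iff']
    exact ⟨heR, fun hind => he.2 (restrict_indep_iff.1 hind).1⟩

lemma aux_basis_rk [M.Finite] (hI : M.IsBasis I X) : M.rk X = I.ncard := by
  have hub : ∀ n ∈ {n | ∃ I', I' ⊆ X ∧ M.Indep I' ∧ I'.ncard = n}, n ≤ I.ncard := by
    rintro n ⟨I', hI'X, hind, rfl⟩
    obtain ⟨I'', hI'', hsub⟩ := hind.subset_isBasis_of_subset hI'X hI.subset_ground
    have h2 : I''.ncard = I.ncard := by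
      rw [Set.ncard_def, hI''.encard_eq_encard hI, ← Set.ncard_def]
    exact h2 ▸ Set.ncard_le_ncard hsub (M.set_finite I'' hI''.indep.subset_ground)
  refine le_antisymm (csSup_le ⟨I.ncard, I, hI.subset, hI.indep, rfl⟩ hub) ?_
  exact le_csSup ⟨I.ncard, hub⟩ ⟨I, hI.subset, hI.indep, rfl⟩

lemma aux_rk_restrict (hXR : X ⊆ R) : (M ↾ R).rk X = M.rk X := by
  unfold rk
  congr 1
  ext n
  simp only [mem_setOf_eq, restrict_indep_iff]
  exact ⟨fun ⟨I, h1, ⟨h2, _⟩, h4⟩ => ⟨I, h1, h2, h4⟩,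
    fun ⟨I, h1, h2, h4⟩ => ⟨I, h1, ⟨h2, h1.trans hXR⟩, h4⟩⟩

lemma aux_rk_closure [M.Finite] (hX : X ⊆ M.E) : M.rk (M.closure X) = M.rk X := by
  obtain ⟨I, hI⟩ := M.exists_isBasis X hX
  rw [aux_basis_rk hI, aux_basis_rk hI.isBasis_closure_right]

lemma aux_indep_rk [M.Finite] (hI : M.Indep I) : M.rk I = I.ncard :=
  aux_basis_rk hI.isBasis_self

end Aux

/-- If `(M, 𝒮; e_1, …, e_h)` is an `(a,q,h,d)`-pyramid,
`M_h = M / {e_1, …, e_h}` and `S ∈ 𝒮`, then there is a restriction `M'` of `M` with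
`r(M') = a + h` such that `(M', {S' ∈ 𝒮 : cl_{M_h}(S') = cl_{M_h}(S)}; e_1, …, e_h)` is an
`(a,q,h,d)`-pyramid. -/
theorem statement18 {α : Type*} (a q d : ℕ) (ha : 1 ≤ a) (hq : 1 ≤ q) (hd : 1 ≤ d)
    (M : Matroid α) (hM : M.Finite) (𝒮 : Finset (Set α)) (L : List α)
    (hP : M.IsPyramid 𝒮 L a q d) (S : Set α) (hS : S ∈ 𝒮) :
    ∃ M' : Matroid α, M'.IsRestriction M ∧ M'.rank = a + L.length ∧
      M'.IsPyramid (𝒮.filter fun S' =>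
        (M.contract' {x | x ∈ L}).closure S' = (M.contract' {x | x ∈ L}).closure S)
        L a q d := by
  classical
  haveI := hM
  obtain ⟨hnd, hLind, hSne, h4, h5, h6, h7⟩ := hP
  set Lset : Set α := {x | x ∈ L} with hLsetdef
  have hLE : Lset ⊆ M.E := hLind.subset_ground
  have hSE : S ⊆ M.E := (h4 S hS).1
  set F : Set α := M.closure (S ∪ Lset) with hFdef
  have hFE : F ⊆ M.E := M.closure_subset_ground _
  have hSLE : S ∪ Lset ⊆ M.E := union_subset hSE hLE
  have hLsubF : Lset ⊆ F := subset_union_right.trans (M.subset_closure _ hSLE)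
  have hSsubF : S ⊆ F := subset_union_left.trans (M.subset_closure _ hSLE)
  haveI : (M ↾ F).Finite := restrict_finite (M.set_finite F hFE)
  -- translation of similarity in the contraction
  have hkey : ∀ X, X ⊆ M.E →
      ((M.contract' Lset).closure X = (M.contract' Lset).closure S ↔
        M.closure (X ∪ Lset) = F) := by
    intro X hX
    rw [aux_contract_closure hLE, aux_contract_closure hLE, ← hFdef]
    constructor
    · intro h
      exact aux_eq_of_diff_eq_of_subset h
        (subset_union_right.trans (M.subset_closure _ (union_subset hX hLE)))
        (subset_union_right.trans (M.subset_closure _ hSLE))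
    · intro h; rw [h]
  -- cardinality of L
  have hLcard : Lset.ncard = L.length := by
    have h1 : Lset = ↑L.toFinset := by ext x; simp [hLsetdef]
    rw [h1, ncard_coe_finset, List.toFinset_card_of_nodup hnd]
  have hrkL : M.rk Lset = L.length := by rw [aux_indep_rk hLind, hLcard]
  have hrkSL : M.rk (S ∪ Lset) = a + L.length := by
    rw [h5 S hS, (h4 S hS).2, hrkL]
  have hrkF : M.rk F = a + L.length := by rw [hFdef, aux_rk_closure hSLE, hrkSL]
  -- facts about members of the filtered collection
  have hmem : ∀ S' ∈ 𝒮, (M.contract' Lset).closure S' = (M.contract' Lset).closure S →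
      M.closure (S' ∪ Lset) = F ∧ S' ⊆ F := by
    intro S' hS'𝒮 hS'P
    have hS'E : S' ⊆ M.E := (h4 S' hS'𝒮).1
    have hS'F : M.closure (S' ∪ Lset) = F := (hkey S' hS'E).1 hS'P
    have hsub : S' ⊆ F := by
      have h' := subset_union_left.trans (M.subset_closure (S' ∪ Lset)
        (union_subset hS'E hLE))
      rwa [hS'F] at h'
    exact ⟨hS'F, hsub⟩
  refine ⟨M ↾ F, ⟨F, hFE, rfl⟩, ?_, ?_⟩
  · show (M ↾ F).rk (M ↾ F).E = a + L.length
    rw [restrict_ground_eq, aux_rk_restrict Subset.rfl, hrkF]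
  refine ⟨hnd, restrict_indep_iff.2 ⟨hLind, hLsubF⟩,
    ⟨S, Finset.mem_filter.2 ⟨hS, rfl⟩⟩, ?_, ?_, ?_, ?_⟩
  · intro S' hS'
    obtain ⟨hS'𝒮, hS'P⟩ := Finset.mem_filter.1 hS'
    obtain ⟨hS'F, hS'sub⟩ := hmem S' hS'𝒮 hS'P
    refine ⟨hS'sub, ?_⟩
    rw [aux_rk_restrict hS'sub]
    exact (h4 S' hS'𝒮).2
  · intro S' hS'
    obtain ⟨hS'𝒮, hS'P⟩ := Finset.mem_filter.1 hS'
    obtain ⟨hS'F, hS'sub⟩ := hmem S' hS'𝒮 hS'P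
    have hS'E : S' ⊆ M.E := (h4 S' hS'𝒮).1
    rw [aux_rk_restrict (union_subset hS'sub hLsubF), aux_rk_restrict hS'sub,
      aux_rk_restrict hLsubF, (h4 S' hS'𝒮).2, hrkL]
    have h1 : M.rk (S' ∪ Lset) = M.rk F := by
      rw [← hS'F, aux_rk_closure (union_subset hS'E hLE)]
    rw [h1, hrkF]
  · intro i hi S' hS'
    obtain ⟨hS'𝒮, hS'P⟩ := Finset.mem_filter.1 hS'
    obtain ⟨hS'F, hS'sub⟩ := hmem S' hS'𝒮 hS'P
    have hS'E : S' ⊆ M.E := (h4 S' hS'𝒮).1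
    obtain ⟨f, hf1, hf2, hf3⟩ := h6 i hi S' hS'𝒮
    set Ci : Set α := {x | x ∈ L.take i} with hCidef
    set Ci1 : Set α := {x | x ∈ L.take (i + 1)} with hCi1def
    have hCiL : Ci ⊆ Lset := fun x hx => List.take_subset i L hx
    have hCi1L : Ci1 ⊆ Lset := fun x hx => List.take_subset (i + 1) L hx
    have hCiE : Ci ⊆ M.E := hCiL.trans hLE
    have hCi1E : Ci1 ⊆ M.E := hCi1L.trans hLE
    have hCiF : Ci ⊆ F := hCiL.trans hLsubF
    have hCi1F : Ci1 ⊆ F := hCi1L.trans hLsubF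
    have hfE : ∀ j, f j ⊆ M.E := fun j => (h4 _ (hf1 j)).1
    -- closure equality at level i+1, in M
    have hj1 : ∀ j, M.closure (f j ∪ Ci1) = M.closure (S' ∪ Ci1) := by
      intro j
      have h' := hf3 j
      rw [aux_contract_closure hCi1E, aux_contract_closure hCi1E] at h'
      exact aux_eq_of_diff_eq_of_subset h'
        (subset_union_right.trans (M.subset_closure _ (union_subset (hfE j) hCi1E)))
        (subset_union_right.trans (M.subset_closure _ (union_subset hS'E hCi1E)))
    -- closure equality at level h, in M
    have hjL : ∀ j, M.closure (f j ∪ Lset) = F := by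
      intro j
      have e1 : f j ∪ Lset = (f j ∪ Ci1) ∪ Lset := by
        rw [union_assoc, union_eq_self_of_subset_left hCi1L]
      have e2 : S' ∪ Lset = (S' ∪ Ci1) ∪ Lset := by
        rw [union_assoc, union_eq_self_of_subset_left hCi1L]
      rw [e1, ← closure_union_closure_left_eq, hj1 j, closure_union_closure_left_eq, ← e2,
        hS'F]
    have hfF : ∀ j, f j ⊆ F := by
      intro j
      have h' := subset_union_left.trans (M.subset_closure (f j ∪ Lset)
        (union_subset (hfE j) hLE))
      rwa [hjL j] at h'
    -- contraction closure formula in the restriction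
    have hform : ∀ X, X ⊆ F → ∀ C, C ⊆ F → C ⊆ M.E →
        ((M ↾ F).contract' C).closure X = (M.closure (X ∪ C) ∩ F) \ C := by
      intro X hXF C hCF hCE
      rw [aux_contract_closure (M := M ↾ F) (by rwa [restrict_ground_eq]),
        aux_restrict_closure (union_subset hXF hCF) hFE]
    refine ⟨f, ?_, ?_, ?_⟩
    · intro j
      refine Finset.mem_filter.2 ⟨hf1 j, ?_⟩
      exact (hkey (f j) (hfE j)).2 (hjL j)
    · intro j k hjk heq
      refine hf2 j k hjk ?_
      rw [hform _ (hfF j) _ hCiF hCiE, hform _ (hfF k) _ hCiF hCiE] at heq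
      have h1 : M.closure (f j ∪ Ci) ∩ F = M.closure (f k ∪ Ci) ∩ F := by
        refine aux_eq_of_diff_eq_of_subset heq ?_ ?_
        · exact subset_inter
            (subset_union_right.trans (M.subset_closure _ (union_subset (hfE j) hCiE))) hCiF
        · exact subset_inter
            (subset_union_right.trans (M.subset_closure _ (union_subset (hfE k) hCiE))) hCiF
      have hclF : ∀ l, M.closure (M.closure (f l ∪ Ci) ∩ F) = M.closure (f l ∪ Ci) := by
        intro l
        refine subset_antisymm ?_ ?_
        · have := M.closure_subset_closure (inter_subset_left
            (s := M.closure (f l ∪ Ci)) (t := F))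
          rwa [closure_closure] at this
        · exact M.closure_subset_closure (subset_inter
            (M.subset_closure _ (union_subset (hfE l) hCiE)) (union_subset (hfF l) hCiF))
      have h2 : M.closure (f j ∪ Ci) = M.closure (f k ∪ Ci) := by
        rw [← hclF j, h1, hclF k]
      rw [aux_contract_closure hCiE, aux_contract_closure hCiE, h2]
    · intro j
      rw [hform _ (hfF j) _ hCi1F hCi1E, hform _ hS'sub _ hCi1F hCi1E, hj1 j]
  · intro S' hS'
    obtain ⟨hS'𝒮, hS'P⟩ := Finset.mem_filter.1 hS'
    obtain ⟨hS'F, hS'sub⟩ := hmem S' hS'𝒮 hS'P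
    show ((M ↾ F) ↾ S').Thick d
    rw [M.restrict_restrict_eq hS'sub]
    exact h7 S' hS'𝒮

end Matroid
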